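/- Let {π^k} be a sequence of deterministic action-dependent policies generated by Algorithm AD-MPI, associated with an ADG G_d. Then for every k ≥ 0 and every s ∈ S, T_{π^{k+1}} V^{π^k}(s) = Q^{V^{π^k}}(s, ā_{π^{k+1}}(s)) ≥ Q^{V^{π^k}}(s, ā_{π^k}(s)) = V^{π^k}(s). -/

import Mathlib

/-- The one-step lookahead value `Q^V(s,a) = r(s,a) + γ Σ_{s'} P(s'|s,a) V(s')`. -/
def QV {n : ℕ} {St : Type*} [Fintype St] {A : Fin n → Type*}
    (P : St → (∀ i, A i) → St → ℝ) (r : St → (∀ i, A i) → ℝ) (γ : ℝ)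
    (V : St → ℝ) : St → (∀ i, A i) → ℝ :=
  fun s a => r s a + γ * ∑ s', P s a s' * V s'

/-- The joint action induced by a deterministic action-dependent policy `π`, with the
coordinates in `F` clamped to the values of `a'`: the agents outside `F` evaluate their
policies in increasing index order (well defined since `Ed j i → j < i`), each `π i`
conditioning on the actions of its in-neighbors `N_d(i) = {j | Ed j i}`. Taking
`F = ∅` yields the induced joint action `ā_π(s)`. -/
def indAct {n : ℕ} {St : Type*} {A : Fin n → Type*}
    (Ed : Fin n → Fin n → Prop) [DecidableRel Ed]
    (hEd : ∀ i j : Fin n, Ed j i → j < i)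
    (π : (i : Fin n) → St → ((j : {j : Fin n // Ed j i}) → A j.1) → A i)
    (F : Finset (Fin n)) (a' : ∀ i, A i) (s : St) : (i : Fin n) → A i
  | i =>
    if i ∈ F then a' i
    else π i s (fun j => indAct Ed hEd π F a' s j.1)
termination_by i => (i : ℕ)
decreasing_by exact hEd i j.1 j.2

/-- The full joint action built from clamped values `c` on `N_d(i)` and a value `ai`
for agent `i` (coordinates outside `N_d[i]` are filled arbitrarily; they are irrelevant
when this vector is used to clamp only the coordinates in `N_d[i]`). -/
noncomputable def cvec {n : ℕ} {A : Fin n → Type*} [∀ i, Nonempty (A i)]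
    (Ed : Fin n → Fin n → Prop) [DecidableRel Ed] (i : Fin n)
    (c : (j : {j : Fin n // Ed j i}) → A j.1) (ai : A i) : ∀ j, A j :=
  fun j =>
    if h : Ed j i then c ⟨j, h⟩
    else if h : j = i then cast (congrArg A h.symm) ai
    else Classical.arbitrary (A j)

/-- `(πseq, Vseq)` is an execution of Algorithm AD-MPI:
* policy evaluation: `Vseq k` is the value function `V^{π^k}`, i.e. the fixed point of
  `T_{π^k} V (s) = Q^V(s, ā_{π^k}(s))`;
* policy iteration: for each agent `i` (in increasing order), `πseq (k+1) i (s, c)`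
  maximizes `a_i ↦ Q^{V^{π^k}}(s, c, a_i, ā_{π^{k,i}_{-N_d[i]}}(s, c, a_i))`, where
  `π^{k,i}` uses the already-updated policies `π^{k+1}_j` for `j < i` and `π^k_j`
  otherwise, and the coordinates in `N_d[i]` are clamped to `(c, a_i)`. -/
noncomputable def ADMPI {n : ℕ} {St : Type*} [Fintype St] {A : Fin n → Type*}
    [∀ i, Fintype (A i)] [∀ i, Nonempty (A i)]
    (P : St → (∀ i, A i) → St → ℝ) (r : St → (∀ i, A i) → ℝ) (γ : ℝ)
    (Ed : Fin n → Fin n → Prop) [DecidableRel Ed]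
    (hEd : ∀ i j : Fin n, Ed j i → j < i)
    (πseq : ℕ → (i : Fin n) → St → ((j : {j : Fin n // Ed j i}) → A j.1) → A i)
    (Vseq : ℕ → St → ℝ) : Prop :=
  (∀ (k : ℕ) (s : St) (a' : ∀ i, A i),
      Vseq k s = QV P r γ (Vseq k) s (indAct Ed hEd (πseq k) ∅ a' s)) ∧
  (∀ (k : ℕ) (i : Fin n) (s : St) (c : (j : {j : Fin n // Ed j i}) → A j.1)
      (ai : A i),
      QV P r γ (Vseq k) s
        (indAct Ed hEd (fun j => if j < i then πseq (k+1) j else πseq k j)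
          (Finset.univ.filter fun j => Ed j i ∨ j = i) (cvec Ed i c ai) s)
      ≤ QV P r γ (Vseq k) s
        (indAct Ed hEd (fun j => if j < i then πseq (k+1) j else πseq k j)
          (Finset.univ.filter fun j => Ed j i ∨ j = i)
          (cvec Ed i c (πseq (k+1) i s c)) s))


section AuxADMPI

variable {n : ℕ} {St : Type*} {A : Fin n → Type*}
  (Ed : Fin n → Fin n → Prop) [DecidableRel Ed]
  (hEd : ∀ i j : Fin n, Ed j i → j < i)

lemma indAct_eq_aux
    (π : (i : Fin n) → St → ((j : {j : Fin n // Ed j i}) → A j.1) → A i)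
    (F : Finset (Fin n)) (a' : ∀ i, A i) (s : St) (i : Fin n) :
    indAct Ed hEd π F a' s i = if i ∈ F then a' i
      else π i s (fun j => indAct Ed hEd π F a' s j.1) := by
  rw [indAct]

/-- If the clamped values agree with the unclamped evaluation of `π'`, and the
policies agree off the clamp set, the clamped evaluation of `π` equals the
unclamped evaluation of `π'`. -/
lemma indAct_clamp_eq_aux
    (π π' : (i : Fin n) → St → ((j : {j : Fin n // Ed j i}) → A j.1) → A i)
    (F : Finset (Fin n)) (a'' b : ∀ i, A i) (s : St)
    (h1 : ∀ j ∉ F, π j s = π' j s)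
    (h2 : ∀ j ∈ F, a'' j = indAct Ed hEd π' ∅ b s j) :
    ∀ i, indAct Ed hEd π F a'' s i = indAct Ed hEd π' ∅ b s i := by
  intro i
  induction i using WellFoundedLT.induction with
  | _ i ih =>
    by_cases hF : i ∈ F
    · rw [indAct_eq_aux, if_pos hF, h2 i hF]
    · rw [indAct_eq_aux, if_neg hF]
      conv_rhs => rw [indAct_eq_aux]
      rw [if_neg (Finset.notMem_empty i), h1 i hF]
      congr 1
      funext j
      exact ih j.1 (hEd i j.1 j.2)

/-- Evaluations of two policies that agree up to `i` agree at `i` (no clamping). -/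
lemma indAct_prefix_aux
    (π π' : (i : Fin n) → St → ((j : {j : Fin n // Ed j i}) → A j.1) → A i)
    (b b' : ∀ i, A i) (s : St) :
    ∀ i : Fin n, (∀ j, j ≤ i → π j s = π' j s) →
      indAct Ed hEd π ∅ b s i = indAct Ed hEd π' ∅ b' s i := by
  intro i
  induction i using WellFoundedLT.induction with
  | _ i ih =>
    intro hag
    rw [indAct_eq_aux, if_neg (Finset.notMem_empty i)]
    conv_rhs => rw [indAct_eq_aux]
    rw [if_neg (Finset.notMem_empty i), hag i le_rfl]
    congr 1
    funext j
    exact ih j.1 (hEd i j.1 j.2) (fun j' hj' => hag j' (hj'.trans (hEd i j.1 j.2).le))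

end AuxADMPI

/-- along any execution of Algorithm AD-MPI,
`T_{π^{k+1}} V^{π^k}(s) = Q^{V^{π^k}}(s, ā_{π^{k+1}}(s)) ≥ Q^{V^{π^k}}(s, ā_{π^k}(s))
 = V^{π^k}(s)` for every `k ≥ 0` and `s`. -/
theorem stmt11 {n : ℕ} {St : Type*} [Fintype St] {A : Fin n → Type*}
    [∀ i, Fintype (A i)] [∀ i, Nonempty (A i)]
    (P : St → (∀ i, A i) → St → ℝ) (r : St → (∀ i, A i) → ℝ) (γ : ℝ)
    (hP0 : ∀ s a s', 0 ≤ P s a s') (hP1 : ∀ s a, ∑ s', P s a s' = 1)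
    (hγ0 : 0 ≤ γ) (hγ1 : γ < 1)
    (Ed : Fin n → Fin n → Prop) [DecidableRel Ed]
    (hEd : ∀ i j : Fin n, Ed j i → j < i)
    (πseq : ℕ → (i : Fin n) → St → ((j : {j : Fin n // Ed j i}) → A j.1) → A i)
    (Vseq : ℕ → St → ℝ)
    (hADMPI : ADMPI P r γ Ed hEd πseq Vseq) :
    ∀ (k : ℕ) (s : St) (a' : ∀ i, A i),
      QV P r γ (Vseq k) s (indAct Ed hEd (πseq k) ∅ a' s) = Vseq k s ∧
      QV P r γ (Vseq k) s (indAct Ed hEd (πseq k) ∅ a' s)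
        ≤ QV P r γ (Vseq k) s (indAct Ed hEd (πseq (k+1)) ∅ a' s) := by
  obtain ⟨heval, himp⟩ := hADMPI
  intro k s a'
  refine ⟨(heval k s a').symm, ?_⟩
  -- the hybrid policy family
  set pol : ℕ → (i : Fin n) → St → ((j : {j : Fin n // Ed j i}) → A j.1) → A i :=
    fun m j => if (j : ℕ) < m then πseq (k+1) j else πseq k j with hpol
  set x : ℕ → ∀ i, A i := fun m => indAct Ed hEd (pol m) ∅ a' s with hx
  have hpol0 : pol 0 = πseq k := by
    funext j; simp [hpol]
  have hpoln : pol n = πseq (k+1) := by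
    funext j; simp [hpol, j.isLt]
  -- policies `pol m` and `pol (m+1)` agree at indices other than `m`
  have hagree : ∀ (m : ℕ) (j : Fin n), (j : ℕ) ≠ m → pol m j = pol (m+1) j := by
    intro m j hj
    by_cases h : (j : ℕ) < m
    · simp [hpol, h, h.trans (Nat.lt_succ_self m)]
    · have h' : ¬ (j : ℕ) < m + 1 := by omega
      simp [hpol, h, h']
  -- prefix agreement of the induced joint actions
  have hprefix : ∀ (m : ℕ) (j : Fin n), (j : ℕ) < m → x m j = x (m+1) j := by
    intro m j hj
    exact indAct_prefix_aux Ed hEd (pol m) (pol (m+1)) a' a' s j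
      (fun j' hj' => by
        rw [hagree m j' (by have := Fin.le_def.mp hj'; omega)])
  -- key step: one agent's improvement
  have hstep : ∀ m : ℕ, m < n →
      QV P r γ (Vseq k) s (x m) ≤ QV P r γ (Vseq k) s (x (m+1)) := by
    intro m hm
    set i : Fin n := ⟨m, hm⟩ with hi
    set c : (j : {j : Fin n // Ed j i}) → A j.1 := fun j => x m j.1 with hc
    have hEdii : ¬ Ed i i := fun h => absurd (hEd i i h) (lt_irrefl i)
    set F : Finset (Fin n) := Finset.univ.filter fun j => Ed j i ∨ j = i with hF
    have hmemF : ∀ j : Fin n, j ∈ F ↔ (Ed j i ∨ j = i) := by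
      intro j; simp [hF]
    have hybeq : (fun j => if j < i then πseq (k+1) j else πseq k j) = pol m := by
      funext j
      by_cases h : (j : ℕ) < m
      · rw [if_pos (Fin.lt_def.mpr h)]; simp [hpol, h]
      · rw [if_neg (fun hc' => h (Fin.lt_def.mp hc'))]; simp [hpol, h]
    -- value of x m at i
    have hxmi : x m i = πseq k i s c := by
      show indAct Ed hEd (pol m) ∅ a' s i = πseq k i s c
      rw [indAct_eq_aux, if_neg (Finset.notMem_empty i)]
      simp [hpol, hi]
      rfl
    -- value of x (m+1) at i
    have hxm1i : x (m+1) i = πseq (k+1) i s c := by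
      show indAct Ed hEd (pol (m+1)) ∅ a' s i = πseq (k+1) i s c
      rw [indAct_eq_aux, if_neg (Finset.notMem_empty i)]
      have : (fun j : {j : Fin n // Ed j i} =>
          indAct Ed hEd (pol (m+1)) ∅ a' s j.1) = c := by
        funext j
        exact ((hprefix m j.1 (Fin.lt_def.mp (hEd i j.1 j.2))).symm)
      rw [this]
      simp [hpol, hi]
    -- Claim A : the clamped evaluation with `a_i = πseq k i s c` is `x m`
    have claimA : indAct Ed hEd (pol m) F (cvec Ed i c (πseq k i s c)) s = x m := by
      funext j
      refine indAct_clamp_eq_aux Ed hEd (pol m) (pol m) F _ a' s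
        (fun _ _ => rfl) ?_ j
      intro j' hj'
      rcases (hmemF j').mp hj' with h | h
      · rw [cvec]; rw [dif_pos h]
      · subst h
        rw [cvec, dif_neg hEdii, dif_pos rfl]
        simpa using hxmi.symm
    -- Claim B : the clamped evaluation with `a_i = πseq (k+1) i s c` is `x (m+1)`
    have claimB : indAct Ed hEd (pol m) F (cvec Ed i c (πseq (k+1) i s c)) s
        = x (m+1) := by
      funext j
      refine indAct_clamp_eq_aux Ed hEd (pol m) (pol (m+1)) F _ a' s ?_ ?_ j
      · intro j' hj'
        have : (j' : ℕ) ≠ m := by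
          intro h
          exact hj' ((hmemF j').mpr (Or.inr (Fin.ext h)))
        rw [hagree m j' this]
      · intro j' hj'
        rcases (hmemF j').mp hj' with h | h
        · rw [cvec, dif_pos h]
          exact hprefix m j' (Fin.lt_def.mp (hEd i j' h))
        · subst h
          rw [cvec, dif_neg hEdii, dif_pos rfl]
          simpa using hxm1i.symm
    have := himp k i s c (πseq k i s c)
    rw [hybeq, claimA, claimB] at this
    exact this
  have chain : ∀ m : ℕ, m ≤ n →
      QV P r γ (Vseq k) s (x 0) ≤ QV P r γ (Vseq k) s (x m) := by
    intro m
    induction m with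
    | zero => intro _; exact le_rfl
    | succ m ih =>
      intro hm
      exact le_trans (ih (by omega)) (hstep m (by omega))
  have hfin := chain n le_rfl
  rw [hx] at hfin
  simpa [hpol0, hpoln] using hfin
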